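/- Let n ≥ 3 be an odd composite integer. Then strictly fewer than half of the nonzero residue classes modulo n are quadratic residues modulo n, and hence there exists a nonzero d in ℤ/nℤ such that both d and -d are quadratic nonresidues modulo n. -/

import Mathlib

open scoped Classical

lemma key2 (a b n : ℕ) (hn : n = a * b) (ha : 2 < a) (hb : 2 < b) (hab : Nat.Coprime a b) :
    ∃ x : ZMod n, x ≠ 0 ∧ x ≠ 1 ∧ x ≠ -1 ∧ x ^ 2 = 1 := by
  subst hn
  haveI : Fact (2 < a) := ⟨ha⟩
  haveI : Fact (2 < b) := ⟨hb⟩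
  haveI : Fact (1 < a) := ⟨by omega⟩
  haveI : Fact (1 < b) := ⟨by omega⟩
  haveI : NeZero (a * b) := ⟨by positivity⟩
  haveI : Fact (1 < a * b) := ⟨by nlinarith⟩
  let e := ZMod.chineseRemainder hab
  refine ⟨e.symm (1, -1), ?_, ?_, ?_, ?_⟩
  · intro h
    have : ((1 : ZMod a), (-1 : ZMod b)) = e 0 := by rw [← h]; simp
    rw [map_zero] at this
    exact one_ne_zero (congrArg Prod.fst this)
  · intro h
    have : ((1 : ZMod a), (-1 : ZMod b)) = e 1 := by rw [← h]; simp
    rw [map_one] at this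
    exact ZMod.neg_one_ne_one (congrArg Prod.snd this)
  · intro h
    have h2 : ((1 : ZMod a), (-1 : ZMod b)) = e (-1) := by rw [← h]; simp
    rw [map_neg, map_one] at h2
    have h3 := congrArg Prod.fst h2
    simp only [Prod.fst_neg, Prod.fst_one] at h3
    exact ZMod.neg_one_ne_one h3.symm
  · have h1 : (e.symm (1, -1)) ^ 2 = e.symm ((1, -1) ^ 2) := by rw [map_pow]
    have h2 : ((1 : ZMod a), (-1 : ZMod b)) ^ 2 = 1 := by
      rw [Prod.pow_def]; simp
    rw [h1, h2, map_one]

lemma key (n : ℕ) (hn : 3 ≤ n) (hodd : Odd n) (hcomp : ¬ n.Prime) :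
    ∃ x : ZMod n, x ≠ 0 ∧ x ≠ 1 ∧ x ≠ -1 ∧ (x ^ 2 = 0 ∨ x ^ 2 = 1) := by
  haveI : NeZero n := ⟨by omega⟩
  haveI : Fact (1 < n) := ⟨by omega⟩
  set p := n.minFac with hp
  have hpp : p.Prime := Nat.minFac_prime (by omega)
  set k := n.factorization p with hk
  have hn0 : n ≠ 0 := by omega
  have hcop : Nat.Coprime (p ^ k) (n / p ^ k) := (Nat.coprime_ordCompl hpp hn0).pow_left _
  have hmul : p ^ k * (n / p ^ k) = n := Nat.ordProj_mul_ordCompl_eq_self n p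
  have hk1 : 1 ≤ k := by
    have : p ∣ n := Nat.minFac_dvd n
    rw [hk]
    exact (Nat.Prime.factorization_pos_of_dvd hpp hn0 this)
  by_cases hb : n / p ^ k = 1
  · -- prime power case, n = p ^ k with k ≥ 2
    have hnpk : n = p ^ k := by rw [← hmul, hb, mul_one]
    have hk2 : 2 ≤ k := by
      have hkne1 : k ≠ 1 := by
        intro h1
        rw [h1, pow_one] at hnpk
        exact hcomp (hnpk ▸ hpp)
      omega
    have hsq : ((p ^ (k - 1) : ℕ) : ZMod n) ^ 2 = 0 := by
      rw [← Nat.cast_pow, ← pow_mul, ZMod.natCast_eq_zero_iff, hnpk]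
      exact pow_dvd_pow p (by omega)
    refine ⟨(p ^ (k - 1) : ℕ), ?_, ?_, ?_, Or.inl hsq⟩
    · rw [Ne, ZMod.natCast_eq_zero_iff]
      intro hdvd
      have h1 : p ^ (k - 1) < n := by
        rw [hnpk]
        exact Nat.pow_lt_pow_right hpp.one_lt (by omega)
      have h2 : 0 < p ^ (k - 1) := Nat.pow_pos hpp.pos
      exact absurd (Nat.le_of_dvd h2 hdvd) (by omega)
    · intro h
      rw [h, one_pow] at hsq
      exact one_ne_zero hsq
    · intro h
      rw [h, neg_one_sq] at hsq
      exact one_ne_zero hsq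
  · -- two coprime factors case
    have hbdvd : (n / p ^ k) ∣ n := Nat.ordCompl_dvd n p
    have hadvd : p ^ k ∣ n := Nat.ordProj_dvd n p
    have hbodd : Odd (n / p ^ k) := hodd.of_dvd_nat hbdvd
    have haodd : Odd (p ^ k) := hodd.of_dvd_nat hadvd
    have hb0 : n / p ^ k ≠ 0 := by
      intro h; rw [h, mul_zero] at hmul; omega
    have hb2 : 2 < n / p ^ k := by
      rcases hbodd with ⟨m, hm⟩; omega
    have ha2 : 2 < p ^ k := by
      rcases haodd with ⟨m, hm⟩
      have : 1 < p ^ k := Nat.one_lt_pow (by omega) hpp.one_lt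
      omega
    obtain ⟨x, hx0, hx1, hxm1, hxsq⟩ := key2 _ _ n hmul.symm ha2 hb2 hcop
    exact ⟨x, hx0, hx1, hxm1, Or.inr hxsq⟩

theorem stmt5 (n : ℕ) (hn : 3 ≤ n) (hodd : Odd n) (hcomp : ¬ n.Prime) [NeZero n] :
    2 * (Finset.univ.filter (fun y : ZMod n => y ≠ 0 ∧ ∃ x : ZMod n, x ^ 2 = y)).card
      < n - 1 ∧
    ∃ d : ZMod n, d ≠ 0 ∧ (¬ ∃ x : ZMod n, x ^ 2 = d) ∧ (¬ ∃ x : ZMod n, x ^ 2 = -d) := by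
  haveI : Fact (1 < n) := ⟨by omega⟩
  haveI : Fact (2 < n) := ⟨by omega⟩
  set QR := Finset.univ.filter (fun y : ZMod n => y ≠ 0 ∧ ∃ x : ZMod n, x ^ 2 = y) with hQR
  set fib : ZMod n → Finset (ZMod n) :=
    fun y => Finset.univ.filter (fun x => x ^ 2 = y) with hfib
  have htwo : IsUnit (2 : ZMod n) := by
    have hc : Nat.Coprime 2 n := by
      refine (Nat.prime_two.coprime_iff_not_dvd).mpr ?_
      rcases hodd with ⟨m, hm⟩
      omega
    have := (ZMod.isUnit_iff_coprime 2 n).mpr hc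
    simpa using this
  have hfib2 : ∀ y ∈ QR, 2 ≤ (fib y).card := by
    intro y hy
    rw [hQR, Finset.mem_filter] at hy
    obtain ⟨-, hy0, r, hr⟩ := hy
    have hrne : r ≠ -r := by
      intro h
      have h2 : (2 : ZMod n) * r = (2 : ZMod n) * 0 := by
        rw [mul_zero]; linear_combination h
      have hr0 : r = 0 := htwo.mul_left_cancel h2
      rw [hr0] at hr
      simp at hr
      exact hy0 hr.symm
    have hsub : ({r, -r} : Finset (ZMod n)) ⊆ fib y := by
      intro x hx
      rw [Finset.mem_insert, Finset.mem_singleton] at hx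
      rw [hfib, Finset.mem_filter]
      rcases hx with rfl | rfl
      · exact ⟨Finset.mem_univ _, hr⟩
      · exact ⟨Finset.mem_univ _, by rw [neg_pow, hr]; ring⟩
    calc 2 = ({r, -r} : Finset (ZMod n)).card := by
              rw [Finset.card_insert_of_notMem (by simpa using hrne), Finset.card_singleton]
      _ ≤ (fib y).card := Finset.card_le_card hsub
  have hdisj : ∀ y1 ∈ QR, ∀ y2 ∈ QR, y1 ≠ y2 → Disjoint (fib y1) (fib y2) := by
    intro y1 _ y2 _ hne
    rw [Finset.disjoint_left]
    intro x hx1 hx2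
    rw [hfib, Finset.mem_filter] at hx1 hx2
    exact hne (hx1.2 ▸ hx2.2 ▸ rfl)
  have hsub : QR.biUnion fib ⊆ Finset.univ.filter (fun x : ZMod n => x ≠ 0) := by
    intro x hx
    rw [Finset.mem_biUnion] at hx
    obtain ⟨y, hy, hxy⟩ := hx
    rw [hQR, Finset.mem_filter] at hy
    rw [hfib, Finset.mem_filter] at hxy
    rw [Finset.mem_filter]
    refine ⟨Finset.mem_univ _, fun hx0 => hy.2.1 ?_⟩
    rw [← hxy.2, hx0]; ring
  have hcard_ne : (Finset.univ.filter (fun x : ZMod n => x ≠ 0)).card = n - 1 := by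
    rw [Finset.filter_ne', Finset.card_erase_of_mem (Finset.mem_univ _), Finset.card_univ,
      ZMod.card]
  have hbiu : (QR.biUnion fib).card = ∑ y ∈ QR, (fib y).card := Finset.card_biUnion hdisj
  obtain ⟨w, hw0, hw1, hwm1, hwsq⟩ := key n hn hodd hcomp
  have main : 2 * QR.card < n - 1 := by
    rcases hwsq with hsq0 | hsq1
    · have hnotmem : w ∉ QR.biUnion fib := by
        rw [Finset.mem_biUnion]
        rintro ⟨y, hy, hwy⟩
        rw [hQR, Finset.mem_filter] at hy
        rw [hfib, Finset.mem_filter] at hwy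
        exact hy.2.1 (by rw [← hwy.2, hsq0])
      have hsub2 : QR.biUnion fib ⊆
          (Finset.univ.filter (fun x : ZMod n => x ≠ 0)).erase w := by
        intro x hx
        rw [Finset.mem_erase]
        exact ⟨fun h => hnotmem (h ▸ hx), hsub hx⟩
      have h1 : (QR.biUnion fib).card ≤ n - 1 - 1 := by
        calc (QR.biUnion fib).card
            ≤ ((Finset.univ.filter (fun x : ZMod n => x ≠ 0)).erase w).card :=
              Finset.card_le_card hsub2
          _ = (Finset.univ.filter (fun x : ZMod n => x ≠ 0)).card - 1 :=
              Finset.card_erase_of_mem (by rw [Finset.mem_filter]; exact ⟨Finset.mem_univ _, hw0⟩)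
          _ = n - 1 - 1 := by rw [hcard_ne]
      have h2 : 2 * QR.card ≤ ∑ y ∈ QR, (fib y).card := by
        have := Finset.card_nsmul_le_sum QR (fun y => (fib y).card) 2 hfib2
        simpa [mul_comm] using this
      omega
    · have h1mem : (1 : ZMod n) ∈ QR := by
        rw [hQR, Finset.mem_filter]
        exact ⟨Finset.mem_univ _, one_ne_zero, 1, one_pow 2⟩
      have h3 : 3 ≤ (fib 1).card := by
        have hss : ({1, -1, w} : Finset (ZMod n)) ⊆ fib 1 := by
          intro x hx
          simp only [Finset.mem_insert, Finset.mem_singleton] at hx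
          rw [hfib, Finset.mem_filter]
          rcases hx with rfl | rfl | rfl
          · exact ⟨Finset.mem_univ _, one_pow 2⟩
          · exact ⟨Finset.mem_univ _, neg_one_sq⟩
          · exact ⟨Finset.mem_univ _, hsq1⟩
        have hc : ({1, -1, w} : Finset (ZMod n)).card = 3 := by
          rw [Finset.card_insert_of_notMem, Finset.card_insert_of_notMem,
            Finset.card_singleton]
          · simpa using (fun h : (-1 : ZMod n) = w => hwm1 h.symm)
          · simp only [Finset.mem_insert, Finset.mem_singleton]
            push_neg
            exact ⟨fun h => ZMod.neg_one_ne_one h.symm, fun h => hw1 h.symm⟩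
        calc 3 = ({1, -1, w} : Finset (ZMod n)).card := hc.symm
          _ ≤ (fib 1).card := Finset.card_le_card hss
      have hsum : 2 * QR.card + 1 ≤ ∑ y ∈ QR, (fib y).card := by
        have hpt : ∀ y ∈ QR, (2 + if y = 1 then 1 else 0) ≤ (fib y).card := by
          intro y hy
          by_cases h : y = 1
          · subst h; simpa using h3
          · simpa [h] using hfib2 y hy
        calc 2 * QR.card + 1
            = ∑ y ∈ QR, (2 + if y = 1 then 1 else 0) := by
              rw [Finset.sum_add_distrib, Finset.sum_const,
                Finset.sum_ite_eq' QR (1 : ZMod n) (fun _ => 1), if_pos h1mem,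
                smul_eq_mul, mul_comm]
          _ ≤ ∑ y ∈ QR, (fib y).card := Finset.sum_le_sum hpt
      have hle : ∑ y ∈ QR, (fib y).card ≤ n - 1 := by
        rw [← hbiu, ← hcard_ne]
        exact Finset.card_le_card hsub
      omega
  refine ⟨main, ?_⟩
  by_contra hcon
  push_neg at hcon
  have hsubU : Finset.univ.filter (fun x : ZMod n => x ≠ 0) ⊆
      QR ∪ QR.image (fun y => -y) := by
    intro d hd
    rw [Finset.mem_filter] at hd
    rw [Finset.mem_union]
    by_cases hA : ∃ x : ZMod n, x ^ 2 = d
    · left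
      rw [hQR, Finset.mem_filter]
      exact ⟨Finset.mem_univ _, hd.2, hA⟩
    · right
      have hB := hcon d hd.2 (fun x hx => hA ⟨x, hx⟩)
      have hnd : -d ≠ 0 := fun h => hd.2 (by simpa using h)
      rw [Finset.mem_image]
      refine ⟨-d, ?_, neg_neg d⟩
      rw [hQR, Finset.mem_filter]
      exact ⟨Finset.mem_univ _, hnd, hB⟩
  have hfinal : n - 1 ≤ 2 * QR.card := by
    calc n - 1 = (Finset.univ.filter (fun x : ZMod n => x ≠ 0)).card := hcard_ne.symm
      _ ≤ (QR ∪ QR.image (fun y => -y)).card := Finset.card_le_card hsubU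
      _ ≤ QR.card + (QR.image (fun y => -y)).card := Finset.card_union_le _ _
      _ ≤ QR.card + QR.card := by
          have := Finset.card_image_le (s := QR) (f := fun y : ZMod n => -y)
          omega
      _ = 2 * QR.card := by ring
  omega
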